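/- Let C be a monoidal category which is preadditive with binary biproducts, and in which tensoring with a fixed object is additive (MonoidalPreadditive). Let X and Y be objects, let (coev₁ : 𝟙_C ⟶ X ⊗ Y, ev₁ : Y ⊗ X ⟶ 𝟙_C) be an exact pairing of X with Y, and let (coev₂ : 𝟙_C ⟶ Y ⊗ X, ev₂ : X ⊗ Y ⟶ 𝟙_C) be an exact pairing of Y with X. Set Z := X ⊞ Y (the biproduct), with injections ι_X : X ⟶ Z, ι_Y : Y ⟶ Z and projections π_X : Z ⟶ X, π_Y : Z ⟶ Y. Define coev : 𝟙_C ⟶ Z ⊗ Z by coev := coev₁ ≫ (ι_X ⊗ ι_Y) + coev₂ ≫ (ι_Y ⊗ ι_X), and ev : Z ⊗ Z ⟶ 𝟙_C by ev := (π_Y ⊗ π_X) ≫ ev₁ + (π_X ⊗ π_Y) ≫ ev₂. Then (coev, ev) is an exact pairing of Z with itself, i.e. Z is self-dual. -/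

import Mathlib

open CategoryTheory Category MonoidalCategory CategoryTheory.Limits

/-- An exact pairing of `X` with `Y` in a monoidal category: a pair of morphisms
`coev : 𝟙_ C ⟶ X ⊗ Y` and `ev : Y ⊗ X ⟶ 𝟙_ C` satisfying the two zig-zag identities
(the axioms of Mathlib's `CategoryTheory.ExactPairing X Y`). -/
def IsExactPairing {C : Type*} [Category C] [MonoidalCategory C] (X Y : C)
    (coev : 𝟙_ C ⟶ X ⊗ Y) (ev : Y ⊗ X ⟶ 𝟙_ C) : Prop :=
  (Y ◁ coev ≫ (α_ Y X Y).inv ≫ ev ▷ Y = (ρ_ Y).hom ≫ (λ_ Y).inv) ∧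
  (coev ▷ X ≫ (α_ X Y X).hom ≫ X ◁ ev = (λ_ X).hom ≫ (ρ_ X).inv)

lemma corner₁ {C : Type*} [Category C] [MonoidalCategory C]
    {W A B P Q V Z : C} (ι : W ⟶ Z) (c : 𝟙_ C ⟶ A ⊗ B) (i : A ⟶ Z) (j : B ⟶ Z)
    (p : Z ⟶ P) (q : Z ⟶ Q) (e : P ⊗ Q ⟶ 𝟙_ C) (π : Z ⟶ V) :
    ι ≫ (ρ_ Z).inv ≫ Z ◁ (c ≫ (i ⊗ₘ j)) ≫ (α_ Z Z Z).inv ≫ ((p ⊗ₘ q) ≫ e) ▷ Z ≫ (λ_ Z).hom ≫ π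
    = (ρ_ W).inv ≫ W ◁ c ≫ (α_ W A B).inv ≫ ((((ι ≫ p) ⊗ₘ (i ≫ q)) ≫ e) ⊗ₘ (j ≫ π)) ≫ (λ_ V).hom := by
  calc ι ≫ (ρ_ Z).inv ≫ Z ◁ (c ≫ (i ⊗ₘ j)) ≫ (α_ Z Z Z).inv ≫ ((p ⊗ₘ q) ≫ e) ▷ Z ≫ (λ_ Z).hom ≫ π
      = (ρ_ W).inv ≫ (𝟙 W ⊗ₘ c) ≫ (ι ⊗ₘ (i ⊗ₘ j)) ≫ (α_ Z Z Z).inv ≫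
          (((p ⊗ₘ q) ≫ e) ⊗ₘ π) ≫ (λ_ V).hom := by
        rw [rightUnitor_inv_naturality_assoc, ← leftUnitor_naturality]
        simp only [← tensorHom_id, ← id_tensorHom, tensorHom_comp_tensorHom_assoc, comp_id, id_comp, assoc]
    _ = (ρ_ W).inv ≫ W ◁ c ≫ (α_ W A B).inv ≫ ((((ι ≫ p) ⊗ₘ (i ≫ q)) ≫ e) ⊗ₘ (j ≫ π)) ≫ (λ_ V).hom := by
        rw [associator_inv_naturality_assoc]
        simp only [id_tensorHom, tensorHom_comp_tensorHom_assoc, comp_id, id_comp, assoc]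

lemma corner₂ {C : Type*} [Category C] [MonoidalCategory C]
    {W A B P Q V Z : C} (ι : W ⟶ Z) (c : 𝟙_ C ⟶ A ⊗ B) (i : A ⟶ Z) (j : B ⟶ Z)
    (p : Z ⟶ P) (q : Z ⟶ Q) (e : P ⊗ Q ⟶ 𝟙_ C) (π : Z ⟶ V) :
    ι ≫ (λ_ Z).inv ≫ (c ≫ (i ⊗ₘ j)) ▷ Z ≫ (α_ Z Z Z).hom ≫ Z ◁ ((p ⊗ₘ q) ≫ e) ≫ (ρ_ Z).hom ≫ π
    = (λ_ W).inv ≫ c ▷ W ≫ (α_ A B W).hom ≫ ((i ≫ π) ⊗ₘ (((j ≫ p) ⊗ₘ (ι ≫ q)) ≫ e)) ≫ (ρ_ V).hom := by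
  calc ι ≫ (λ_ Z).inv ≫ (c ≫ (i ⊗ₘ j)) ▷ Z ≫ (α_ Z Z Z).hom ≫ Z ◁ ((p ⊗ₘ q) ≫ e) ≫ (ρ_ Z).hom ≫ π
      = (λ_ W).inv ≫ (c ⊗ₘ 𝟙 W) ≫ ((i ⊗ₘ j) ⊗ₘ ι) ≫ (α_ Z Z Z).hom ≫
          (π ⊗ₘ ((p ⊗ₘ q) ≫ e)) ≫ (ρ_ V).hom := by
        rw [leftUnitor_inv_naturality_assoc, ← rightUnitor_naturality]
        simp only [← tensorHom_id, ← id_tensorHom, tensorHom_comp_tensorHom_assoc, comp_id, id_comp, assoc]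
    _ = (λ_ W).inv ≫ c ▷ W ≫ (α_ A B W).hom ≫ ((i ≫ π) ⊗ₘ (((j ≫ p) ⊗ₘ (ι ≫ q)) ≫ e)) ≫ (ρ_ V).hom := by
        rw [associator_naturality_assoc]
        simp only [tensorHom_id, tensorHom_comp_tensorHom_assoc, comp_id, id_comp, assoc]


/-- If `Y` is a right dual of `X` and `X` is a right dual of `Y`, then the biproduct
`X ⊞ Y` is self-dual, with the indicated coevaluation and evaluation.  This is the
self-dual structure on `V ⊕ *V` of Example 2.3 of the paper. -/
theorem isExactPairing_biprod_selfDual {C : Type*} [Category C] [MonoidalCategory C]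
    [Preadditive C] [MonoidalPreadditive C] [HasBinaryBiproducts C]
    (X Y : C) (coev₁ : 𝟙_ C ⟶ X ⊗ Y) (ev₁ : Y ⊗ X ⟶ 𝟙_ C)
    (coev₂ : 𝟙_ C ⟶ Y ⊗ X) (ev₂ : X ⊗ Y ⟶ 𝟙_ C)
    (h₁ : IsExactPairing X Y coev₁ ev₁) (h₂ : IsExactPairing Y X coev₂ ev₂) :
    IsExactPairing (X ⊞ Y) (X ⊞ Y)
      (coev₁ ≫ ((biprod.inl : X ⟶ X ⊞ Y) ⊗ₘ (biprod.inr : Y ⟶ X ⊞ Y)) +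
        coev₂ ≫ ((biprod.inr : Y ⟶ X ⊞ Y) ⊗ₘ (biprod.inl : X ⟶ X ⊞ Y)))
      (((biprod.snd : X ⊞ Y ⟶ Y) ⊗ₘ (biprod.fst : X ⊞ Y ⟶ X)) ≫ ev₁ +
        ((biprod.fst : X ⊞ Y ⟶ X) ⊗ₘ (biprod.snd : X ⊞ Y ⟶ Y)) ≫ ev₂) := by
  obtain ⟨ha, hb⟩ := h₁
  obtain ⟨hc, hd⟩ := h₂
  constructor
  · rw [← cancel_epi (ρ_ (X ⊞ Y)).inv, ← cancel_mono (λ_ (X ⊞ Y)).hom]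
    apply biprod.hom_ext' <;> apply biprod.hom_ext <;>
    · simp only [MonoidalPreadditive.whiskerLeft_add, MonoidalPreadditive.add_whiskerRight,
        Preadditive.add_comp, Preadditive.comp_add, assoc]
      rw [corner₁, corner₁, corner₁, corner₁]
      simp [reassoc_of% ha, reassoc_of% hc]
  · rw [← cancel_epi (λ_ (X ⊞ Y)).inv, ← cancel_mono (ρ_ (X ⊞ Y)).hom]
    apply biprod.hom_ext' <;> apply biprod.hom_ext <;>
    · simp only [MonoidalPreadditive.whiskerLeft_add, MonoidalPreadditive.add_whiskerRight,
        Preadditive.add_comp, Preadditive.comp_add, assoc]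
      rw [corner₂, corner₂, corner₂, corner₂]
      simp [reassoc_of% hb, reassoc_of% hd]
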